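/- Let X be a random vector in ℝⁿ which is a sum of q standard Gaussian random vectors. For any τ > 0, the rescaled vector τX is a sum of (⌊τ⌋ + 2)q standard Gaussian random vectors. -/

import Mathlib

open MeasureTheory ProbabilityTheory

/-- The standard Gaussian measure on `ℝⁿ`. -/
noncomputable def stdGaussian (n : ℕ) : Measure (Fin n → ℝ) :=
  Measure.pi fun _ => gaussianReal 0 1

/-- A probability distribution `ν` on `ℝⁿ` is a sum of `q` standard Gaussian random vectors if
there exist `q` (not necessarily independent) standard Gaussian random vectors on a common
probability space whose sum has distribution `ν`. -/
def IsSumOfGaussians (n q : ℕ) (ν : Measure (Fin n → ℝ)) : Prop :=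
  ∃ (Ω : Type) (_ : MeasurableSpace Ω) (μ : Measure Ω) (_ : IsProbabilityMeasure μ)
    (G : Fin q → Ω → Fin n → ℝ), (∀ i, Measurable (G i)) ∧
    (∀ i, μ.map (G i) = stdGaussian n) ∧
    μ.map (fun ω => ∑ i, G i ω) = ν



open Real
open scoped ENNReal NNReal

instance stdGaussian_isProb (n : ℕ) : IsProbabilityMeasure (stdGaussian n) := by
  unfold _root_.stdGaussian; infer_instance

lemma myGaussianPDFReal_conv {a b : ℝ≥0} (ha : a ≠ 0) (hb : b ≠ 0) (y x : ℝ) :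
    gaussianPDFReal 0 a x * gaussianPDFReal 0 b (y - x) =
      gaussianPDFReal 0 (a + b) y * gaussianPDFReal ((a : ℝ) * y / ((a : ℝ) + b)) (a * b / (a + b)) x := by
  have hA : (0:ℝ) < a := lt_of_le_of_ne (NNReal.coe_nonneg a) (by exact_mod_cast ha.symm)
  have hB : (0:ℝ) < b := lt_of_le_of_ne (NNReal.coe_nonneg b) (by exact_mod_cast hb.symm)
  have hAB : (0:ℝ) < (a:ℝ) + b := by linarith
  have hcast : ((a * b / (a + b) : ℝ≥0) : ℝ) = (a : ℝ) * b / ((a : ℝ) + b) := by push_cast; ring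
  have hpi : (0:ℝ) < 2 * π := by positivity
  simp only [gaussianPDFReal, hcast, NNReal.coe_add, sub_zero]
  rw [mul_mul_mul_comm, ← Real.exp_add, mul_mul_mul_comm, ← Real.exp_add]
  congr 1
  · rw [← mul_inv, ← mul_inv, ← Real.sqrt_mul (by positivity), ← Real.sqrt_mul (by positivity)]
    congr 1
    field_simp
  · congr 1
    field_simp
    ring

lemma myGaussianReal_conv (a b : ℝ≥0) :
    ((gaussianReal 0 a).prod (gaussianReal 0 b)).map (fun p : ℝ × ℝ => p.1 + p.2)
      = gaussianReal 0 (a + b) := by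
  rcases eq_or_ne a 0 with rfl | ha
  · rw [gaussianReal_zero_var, Measure.dirac_prod, Measure.map_map measurable_add measurable_prodMk_left]
    simp [Function.comp_def]
  rcases eq_or_ne b 0 with rfl | hb
  · rw [gaussianReal_zero_var, Measure.prod_dirac, Measure.map_map measurable_add measurable_prodMk_right]
    simp [Function.comp_def]
  have hab : a + b ≠ 0 := fun h => ha (by simpa using (add_eq_zero.mp h).1)
  have hv' : a * b / (a + b) ≠ 0 := by
    rw [ne_eq, div_eq_zero_iff]
    simp [ha, hb, hab]
  ext s hs
  rw [Measure.map_apply measurable_add hs, Measure.prod_apply (measurable_add hs)]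
  have hkey : ∀ x : ℝ, gaussianReal 0 b (Prod.mk x ⁻¹' ((fun p : ℝ × ℝ => p.1 + p.2) ⁻¹' s))
      = ∫⁻ y in s, gaussianPDF x b y := by
    intro x
    have : Prod.mk x ⁻¹' ((fun p : ℝ × ℝ => p.1 + p.2) ⁻¹' s) = (fun y => x + y) ⁻¹' s := rfl
    rw [this, ← Measure.map_apply (measurable_const_add x) hs, gaussianReal_map_const_add,
      zero_add, gaussianReal_apply _ hb]
  simp_rw [hkey]
  have hmeas2 : Measurable (Function.uncurry fun x y => gaussianPDF x b y) := by
    unfold gaussianPDF gaussianPDFReal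
    fun_prop
  have hmeas1 : Measurable fun x => ∫⁻ y in s, gaussianPDF x b y :=
    hmeas2.lintegral_prod_right'
  rw [gaussianReal_of_var_ne_zero 0 ha,
    lintegral_withDensity_eq_lintegral_mul _ (measurable_gaussianPDF 0 a) hmeas1]
  have hpull : ∫⁻ x, (gaussianPDF 0 a * fun x => ∫⁻ y in s, gaussianPDF x b y) x
      = ∫⁻ x, ∫⁻ y in s, gaussianPDF 0 a x * gaussianPDF x b y := by
    refine lintegral_congr fun x => ?_
    simp only [Pi.mul_apply]
    exact (lintegral_const_mul' _ _ ENNReal.ofReal_ne_top).symm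
  rw [hpull]
  rw [lintegral_lintegral_swap (by
    refine (Measurable.aemeasurable ?_)
    have : Measurable fun p : ℝ × ℝ => gaussianPDF 0 a p.1 :=
      (measurable_gaussianPDF 0 a).comp measurable_fst
    exact this.mul hmeas2)]
  have hpt : ∀ y x : ℝ, gaussianPDF 0 a x * gaussianPDF x b y
      = gaussianPDF 0 (a + b) y * gaussianPDF ((a : ℝ) * y / ((a : ℝ) + b)) (a * b / (a + b)) x := by
    intro y x
    unfold gaussianPDF
    rw [← ENNReal.ofReal_mul (gaussianPDFReal_nonneg _ _ _),
      ← ENNReal.ofReal_mul (gaussianPDFReal_nonneg _ _ _)]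
    congr 1
    have : gaussianPDFReal x b y = gaussianPDFReal 0 b (y - x) := by
      rw [gaussianPDFReal_sub, zero_add]
    rw [this, myGaussianPDFReal_conv ha hb]
  simp_rw [hpt]
  rw [gaussianReal_apply 0 hab]
  refine setLIntegral_congr_fun hs (fun y _ => ?_)
  rw [lintegral_const_mul _ (measurable_gaussianPDF _ _), lintegral_gaussianPDF_eq_one _ hv', mul_one]

lemma myGaussianReal_rot {a b : ℝ} (hab : a ^ 2 + b ^ 2 = 1) :
    ((gaussianReal 0 1).prod (gaussianReal 0 1)).map (fun p : ℝ × ℝ => a * p.1 + b * p.2)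
      = gaussianReal 0 1 := by
  have h1 : (fun p : ℝ × ℝ => a * p.1 + b * p.2)
      = (fun p : ℝ × ℝ => p.1 + p.2) ∘ (Prod.map (a * ·) (b * ·)) := rfl
  rw [h1, ← Measure.map_map measurable_add ((measurable_const_mul a).prodMap (measurable_const_mul b)),
    ← Measure.map_prod_map _ _ (measurable_const_mul a) (measurable_const_mul b),
    gaussianReal_map_const_mul, gaussianReal_map_const_mul, mul_zero, mul_zero,
    myGaussianReal_conv]
  congr 1
  rw [mul_one, mul_one, ← NNReal.coe_inj]
  push_cast
  exact hab

lemma myStdGaussian_rot (n : ℕ) {a b : ℝ} (hab : a ^ 2 + b ^ 2 = 1) :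
    ((stdGaussian n).prod (stdGaussian n)).map
      (fun p : (Fin n → ℝ) × (Fin n → ℝ) => a • p.1 + b • p.2) = stdGaussian n := by
  have hmp := measurePreserving_arrowProdEquivProdArrow ℝ ℝ (Fin n)
    (fun _ => gaussianReal 0 1) (fun _ => gaussianReal 0 1)
  have hpi := measurePreserving_pi (fun _ : Fin n => (gaussianReal 0 1).prod (gaussianReal 0 1))
    (fun _ : Fin n => gaussianReal 0 1)
    (f := fun _ (p : ℝ × ℝ) => a * p.1 + b * p.2)
    (fun _ => ⟨by fun_prop, myGaussianReal_rot hab⟩)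
  have hcomp : (fun p : (Fin n → ℝ) × (Fin n → ℝ) => a • p.1 + b • p.2)
        ∘ (MeasurableEquiv.arrowProdEquivProdArrow ℝ ℝ (Fin n))
      = fun (g : Fin n → ℝ × ℝ) (i : Fin n) => a * (g i).1 + b * (g i).2 := by
    funext g
    simp [MeasurableEquiv.arrowProdEquivProdArrow, Equiv.arrowProdEquivProdArrow]
    rfl
  have hprod : (stdGaussian n).prod (stdGaussian n)
      = (Measure.pi fun _ : Fin n => (gaussianReal 0 1).prod (gaussianReal 0 1)).map
          (MeasurableEquiv.arrowProdEquivProdArrow ℝ ℝ (Fin n)) := hmp.map_eq.symm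
  rw [hprod, Measure.map_map (by fun_prop) (MeasurableEquiv.measurable _), hcomp, hpi.map_eq]
  rfl

lemma myLawComb {n : ℕ} {Ω : Type} [MeasurableSpace Ω] (μ : Measure Ω) [IsProbabilityMeasure μ]
    {G : Ω → Fin n → ℝ} (hG : Measurable G) (hlaw : μ.map G = stdGaussian n)
    {a b : ℝ} (hab : a ^ 2 + b ^ 2 = 1) :
    (μ.prod (stdGaussian n)).map (fun p => a • G p.1 + b • p.2) = stdGaussian n := by
  have h1 : (fun p : Ω × (Fin n → ℝ) => a • G p.1 + b • p.2)
      = (fun p : (Fin n → ℝ) × (Fin n → ℝ) => a • p.1 + b • p.2) ∘ (Prod.map G id) := rfl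
  rw [h1, ← Measure.map_map (by fun_prop) (hG.prodMap measurable_id),
    ← Measure.map_prod_map _ _ hG measurable_id, hlaw, Measure.map_id, myStdGaussian_rot n hab]

/-- If `X` is a sum of `q` standard Gaussian random vectors in `ℝⁿ`, then for any `τ > 0`,
`τX` is a sum of `(⌊τ⌋ + 2)q` standard Gaussian random vectors. -/
theorem isSumOfGaussians_smul (n q : ℕ) (ν : Measure (Fin n → ℝ))
    (h : IsSumOfGaussians n q ν) (τ : ℝ) (hτ : 0 < τ) :
    IsSumOfGaussians n ((Nat.floor τ + 2) * q) (ν.map (fun x => τ • x)) := by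
  obtain ⟨Ω, mΩ, μ, hμ, G, hGm, hGlaw, hGsum⟩ := h
  set m : ℕ := Nat.floor τ with hm
  set δ : ℝ := τ - m with hδdef
  have hδ0 : 0 ≤ δ := by
    have := Nat.floor_le hτ.le
    rw [hδdef]; linarith
  have hδ1 : δ < 1 := by
    have := Nat.lt_floor_add_one τ
    rw [hδdef]; push_cast; linarith [Nat.lt_floor_add_one τ]
  set c : ℝ := Real.sqrt (1 - (δ/2)^2) with hcdef
  have hc : (δ/2)^2 + c^2 = 1 := by
    rw [hcdef, Real.sq_sqrt (by nlinarith)]; ring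
  set a : Fin (m+2) → ℝ := fun j => if (j : ℕ) < m then 1 else δ/2 with hadef
  set b : Fin (m+2) → ℝ := fun j => if (j : ℕ) < m then 0 else if (j : ℕ) = m then c else -c
    with hbdef
  have hab : ∀ j, (a j)^2 + (b j)^2 = 1 := by
    intro j
    simp only [hadef, hbdef]
    by_cases h1 : (j:ℕ) < m
    · simp [h1]
    · by_cases h2 : (j:ℕ) = m
      · simpa [h1, h2] using hc
      · simpa [h1, h2, neg_sq] using hc
  have hsum_a : ∑ j, a j = τ := by
    rw [Fin.sum_univ_castSucc, Fin.sum_univ_castSucc]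
    have h1 : ∀ j : Fin m, a (j.castSucc.castSucc) = 1 := by
      intro j; simp [hadef, j.isLt]
    have h2 : a ((Fin.last m).castSucc) = δ/2 := by simp [hadef]
    have h3 : a (Fin.last (m+1)) = δ/2 := by simp [hadef]
    simp only [h2, h3, Finset.sum_congr rfl fun j _ => h1 j]
    rw [Finset.sum_const, Finset.card_univ, Fintype.card_fin]
    rw [hδdef]; push_cast; ring
  have hsum_b : ∑ j, b j = 0 := by
    rw [Fin.sum_univ_castSucc, Fin.sum_univ_castSucc]
    have h1 : ∀ j : Fin m, b (j.castSucc.castSucc) = 0 := by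
      intro j; simp [hbdef, j.isLt]
    have h2 : b ((Fin.last m).castSucc) = c := by simp [hbdef]
    have h3 : b (Fin.last (m+1)) = -c := by simp [hbdef]
    simp only [h2, h3, Finset.sum_congr rfl fun j _ => h1 j]
    simp
  refine ⟨Ω × (Fin n → ℝ), inferInstance, μ.prod (stdGaussian n), inferInstance,
    fun k p => a (finProdFinEquiv.symm k).1 • G (finProdFinEquiv.symm k).2 p.1
      + b (finProdFinEquiv.symm k).1 • p.2, ?_, ?_, ?_⟩
  · intro k
    exact (((hGm _).comp measurable_fst).const_smul
      (a (finProdFinEquiv.symm k).1)).add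
      (measurable_snd.const_smul (b (finProdFinEquiv.symm k).1))
  · intro k
    exact myLawComb μ (hGm _) (hGlaw _) (hab _)
  · have hfe : (fun p : Ω × (Fin n → ℝ) => ∑ k : Fin ((m+2)*q),
        (a (finProdFinEquiv.symm k).1 • G (finProdFinEquiv.symm k).2 p.1
          + b (finProdFinEquiv.symm k).1 • p.2))
        = fun p => τ • ∑ i, G i p.1 := by
      funext p
      rw [Equiv.sum_comp finProdFinEquiv.symm
        (fun ji : Fin (m+2) × Fin q => a ji.1 • G ji.2 p.1 + b ji.1 • p.2)]
      rw [Fintype.sum_prod_type]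
      have : ∀ j : Fin (m+2), ∑ i, (a j • G i p.1 + b j • p.2)
          = a j • ∑ i, G i p.1 + ((q : ℝ) * b j) • p.2 := by
        intro j
        rw [Finset.sum_add_distrib, ← Finset.smul_sum, Finset.sum_const, Finset.card_univ,
          Fintype.card_fin, mul_smul]
        congr 1
        rw [← Nat.cast_smul_eq_nsmul ℝ]
      simp only [this]
      rw [Finset.sum_add_distrib, ← Finset.sum_smul, ← Finset.sum_smul, hsum_a,
        ← Finset.mul_sum, hsum_b, mul_zero, zero_smul, add_zero]
    rw [hfe]
    have h2 : (fun p : Ω × (Fin n → ℝ) => τ • ∑ i, G i p.1)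
        = (fun x : Fin n → ℝ => τ • x) ∘ (fun ω => ∑ i, G i ω) ∘ Prod.fst := rfl
    have hmsum : Measurable fun ω : Ω => ∑ i, G i ω :=
      Finset.measurable_sum _ fun i _ => hGm i
    have hmsmul : Measurable fun x : Fin n → ℝ => τ • x :=
      (continuous_const_smul τ).measurable
    rw [h2, ← Function.comp_assoc, ← Measure.map_map (hmsmul.comp hmsum) measurable_fst,
      Measure.map_fst_prod, measure_univ, one_smul,
      ← Measure.map_map hmsmul hmsum, hGsum]
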